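/- Let A and B be Hopf algebras over ℂ and τ : A × B → ℂ a skew pairing with convolution inverse τ⁻¹(a, b) = τ(S(a), b). Then the bilinear map σ : (A ⊗ B) × (A ⊗ B) → ℂ defined by σ(a ⊗ b, a' ⊗ b') = ε(a)ε(b')τ(a', b) is a normalised 2-cocycle for the tensor product Hopf algebra A ⊗ B: it satisfies σ(h_(1), k_(1)) σ(h_(2)k_(2), l) = σ(k_(1), l_(1)) σ(h, k_(2)l_(2)) for all h, k, l ∈ A ⊗ B, and σ(h, 1) = σ(1, h) = ε(h). -/

import Mathlib

open TensorProduct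

/-- Convolution of two linear functionals on a coalgebra over `ℂ`:
`(conv f g) c = ∑ f c₍₁₎ * g c₍₂₎` in Sweedler notation. -/
noncomputable def conv {C : Type} [AddCommGroup C] [Module ℂ C] [Coalgebra ℂ C]
    (f g : C →ₗ[ℂ] ℂ) : C →ₗ[ℂ] ℂ :=
  LinearMap.mul' ℂ ℂ ∘ₗ TensorProduct.map f g ∘ₗ Coalgebra.comul

/-- Convolution of two bilinear forms on a coalgebra over `ℂ`:
`(conv₂ f g) h k = ∑ f h₍₁₎ k₍₁₎ * g h₍₂₎ k₍₂₎` in Sweedler notation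
(convolution with respect to the tensor product coalgebra `C ⊗ C`). -/
noncomputable def conv₂ {C : Type} [AddCommGroup C] [Module ℂ C] [Coalgebra ℂ C]
    (f g : C →ₗ[ℂ] C →ₗ[ℂ] ℂ) : C →ₗ[ℂ] C →ₗ[ℂ] ℂ :=
  TensorProduct.curry (conv (TensorProduct.lift f) (TensorProduct.lift g))

/-- The 2-cochain `σ(a ⊗ b, a' ⊗ b') = ε(a) ε(b') τ(a', b)` on the tensor
product Hopf algebra `A ⊗ B`, as a bilinear form. -/
noncomputable def sigmaOf {A B : Type} [Ring A] [Ring B]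
    [HopfAlgebra ℂ A] [HopfAlgebra ℂ B] (τ : A →ₗ[ℂ] B →ₗ[ℂ] ℂ) :
    (A ⊗[ℂ] B) →ₗ[ℂ] (A ⊗[ℂ] B) →ₗ[ℂ] ℂ :=
  TensorProduct.curry <|
    LinearMap.mul' ℂ ℂ ∘ₗ
      TensorProduct.map (TensorProduct.lift τ)
        (TensorProduct.lift ((LinearMap.mul ℂ ℂ).compl₁₂
          (Coalgebra.counit : A →ₗ[ℂ] ℂ) (Coalgebra.counit : B →ₗ[ℂ] ℂ))) ∘ₗ
      (tensorTensorTensorComm ℂ A A B B).toLinearMap ∘ₗ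
      TensorProduct.map (TensorProduct.comm ℂ A A).toLinearMap LinearMap.id ∘ₗ
      (tensorTensorTensorComm ℂ A B A B).toLinearMap

section Helpers
open Coalgebra

lemma sum4_reorder {α β γ δ M : Type*} [AddCommMonoid M]
    (s : Finset α) (t : Finset β) (u : Finset γ) (v : Finset δ)
    (T : α → β → γ → δ → M) :
    ∑ i' ∈ u, ∑ j' ∈ v, ∑ i ∈ s, ∑ j ∈ t, T i j i' j'
      = ∑ i ∈ s, ∑ j ∈ t, ∑ i' ∈ u, ∑ j' ∈ v, T i j i' j' := by
  calc ∑ i' ∈ u, ∑ j' ∈ v, ∑ i ∈ s, ∑ j ∈ t, T i j i' j'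
      = ∑ i' ∈ u, ∑ i ∈ s, ∑ j' ∈ v, ∑ j ∈ t, T i j i' j' :=
        Finset.sum_congr rfl fun _ _ => Finset.sum_comm
    _ = ∑ i ∈ s, ∑ i' ∈ u, ∑ j' ∈ v, ∑ j ∈ t, T i j i' j' := Finset.sum_comm
    _ = ∑ i ∈ s, ∑ i' ∈ u, ∑ j ∈ t, ∑ j' ∈ v, T i j i' j' :=
        Finset.sum_congr rfl fun _ _ => Finset.sum_congr rfl fun _ _ => Finset.sum_comm
    _ = ∑ i ∈ s, ∑ j ∈ t, ∑ i' ∈ u, ∑ j' ∈ v, T i j i' j' :=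
        Finset.sum_congr rfl fun _ _ => Finset.sum_comm

variable {C : Type} [AddCommGroup C] [Module ℂ C] [Coalgebra ℂ C]

lemma conv_repr (f g : C →ₗ[ℂ] ℂ) {x : C} (r : Coalgebra.Repr ℂ x (C × C)) :
    conv f g x = ∑ i ∈ r.index, f (r.left i) * g (r.right i) := by
  simp [conv, ← r.eq, map_sum]

lemma collapse_left (F : C →ₗ[ℂ] ℂ) {x : C} (r : Coalgebra.Repr ℂ x (C × C)) :
    ∑ i ∈ r.index, counit (R := ℂ) (r.left i) * F (r.right i) = F x := by
  have h := Coalgebra.sum_counit_tmul_eq r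
  have h2 := congrArg (TensorProduct.lid ℂ C) h
  simp only [map_sum, lid_tmul] at h2
  calc ∑ i ∈ r.index, counit (R := ℂ) (r.left i) * F (r.right i)
      = F (∑ i ∈ r.index, counit (R := ℂ) (r.left i) • r.right i) := by
        simp [map_sum, smul_eq_mul]
    _ = F x := by rw [h2]; simp

lemma collapse_right (F : C →ₗ[ℂ] ℂ) {x : C} (r : Coalgebra.Repr ℂ x (C × C)) :
    ∑ i ∈ r.index, F (r.left i) * counit (R := ℂ) (r.right i) = F x := by
  have h := Coalgebra.sum_tmul_counit_eq r
  have h2 := congrArg (TensorProduct.rid ℂ C) h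
  simp only [map_sum, rid_tmul] at h2
  calc ∑ i ∈ r.index, F (r.left i) * counit (R := ℂ) (r.right i)
      = F (∑ i ∈ r.index, counit (R := ℂ) (r.right i) • r.left i) := by
        simp [map_sum, smul_eq_mul, mul_comm]
    _ = F x := by rw [h2]; simp

lemma collapse_counit {x : C} (r : Coalgebra.Repr ℂ x (C × C)) :
    ∑ i ∈ r.index, counit (R := ℂ) (r.left i) * counit (R := ℂ) (r.right i)
      = counit (R := ℂ) x :=
  collapse_left counit r

variable {A B : Type} [Ring A] [Ring B] [HopfAlgebra ℂ A] [HopfAlgebra ℂ B]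

lemma sigma_tmul (τ : A →ₗ[ℂ] B →ₗ[ℂ] ℂ) (a a' : A) (b b' : B) :
    sigmaOf τ (a ⊗ₜ[ℂ] b) (a' ⊗ₜ[ℂ] b') =
      τ a' b * (counit (R := ℂ) a * counit (R := ℂ) b') := by
  simp [sigmaOf]

lemma comul_tmul_repr {a : A} {b : B} (ra : Coalgebra.Repr ℂ a (A × A)) (rb : Coalgebra.Repr ℂ b (B × B)) :
    Coalgebra.comul (R := ℂ) (a ⊗ₜ[ℂ] b) =
      ∑ i ∈ ra.index, ∑ j ∈ rb.index,
        (ra.left i ⊗ₜ[ℂ] rb.left j) ⊗ₜ[ℂ] (ra.right i ⊗ₜ[ℂ] rb.right j) := by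
  simp only [TensorProduct.comul_tmul, LinearMap.coe_comp, Function.comp_apply,
    map_tmul, ← ra.eq, ← rb.eq, sum_tmul, tmul_sum, map_sum, AlgebraTensorModule.tensorTensorTensorComm_tmul]
  rw [Finset.sum_comm]

lemma conv₂_repr (f g : (A ⊗[ℂ] B) →ₗ[ℂ] (A ⊗[ℂ] B) →ₗ[ℂ] ℂ) {a a' : A} {b b' : B}
    (ra : Coalgebra.Repr ℂ a (A × A)) (ra' : Coalgebra.Repr ℂ a' (A × A))
    (rb : Coalgebra.Repr ℂ b (B × B)) (rb' : Coalgebra.Repr ℂ b' (B × B)) :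
    conv₂ f g (a ⊗ₜ[ℂ] b) (a' ⊗ₜ[ℂ] b') =
      ∑ i ∈ ra.index, ∑ j ∈ rb.index, ∑ i' ∈ ra'.index, ∑ j' ∈ rb'.index,
        f (ra.left i ⊗ₜ[ℂ] rb.left j) (ra'.left i' ⊗ₜ[ℂ] rb'.left j') *
        g (ra.right i ⊗ₜ[ℂ] rb.right j) (ra'.right i' ⊗ₜ[ℂ] rb'.right j') := by
  have e : conv₂ f g (a ⊗ₜ[ℂ] b) (a' ⊗ₜ[ℂ] b') =
      conv (TensorProduct.lift f) (TensorProduct.lift g)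
        ((a ⊗ₜ[ℂ] b) ⊗ₜ[ℂ] (a' ⊗ₜ[ℂ] b')) := rfl
  rw [e, conv]
  simp only [LinearMap.coe_comp, Function.comp_apply,
    TensorProduct.comul_tmul (A := A ⊗[ℂ] B) (B := A ⊗[ℂ] B),
    map_tmul, comul_tmul_repr ra rb, comul_tmul_repr ra' rb',
    sum_tmul, tmul_sum, map_sum]
  have hre := sum4_reorder ra.index rb.index ra'.index rb'.index (fun i j i' j' =>
    f (ra.left i ⊗ₜ[ℂ] rb.left j) (ra'.left i' ⊗ₜ[ℂ] rb'.left j') *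
    g (ra.right i ⊗ₜ[ℂ] rb.right j) (ra'.right i' ⊗ₜ[ℂ] rb'.right j'))
  refine Eq.trans ?_ hre
  refine Finset.sum_congr rfl fun i' _ => Finset.sum_congr rfl fun j' _ =>
    Finset.sum_congr rfl fun i _ => Finset.sum_congr rfl fun j _ => ?_
  simp

end Helpers

section Key
open Coalgebra
variable {A B : Type} [Ring A] [Ring B] [HopfAlgebra ℂ A] [HopfAlgebra ℂ B]
variable (τ : A →ₗ[ℂ] B →ₗ[ℂ] ℂ)

lemma lhs_red
    (h2 : ∀ (a : A) (b b' : B), τ a (b * b') = conv (τ.flip b') (τ.flip b) a)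
    (a a' a'' : A) (b b' b'' : B)
    (ra : Coalgebra.Repr ℂ a (A × A)) (ra' : Coalgebra.Repr ℂ a' (A × A)) (ra'' : Coalgebra.Repr ℂ a'' (A × A))
    (rb : Coalgebra.Repr ℂ b (B × B)) (rb' : Coalgebra.Repr ℂ b' (B × B)) :
    conv₂ (sigmaOf τ)
        ((LinearMap.mul ℂ (A ⊗[ℂ] B)).compr₂ ((sigmaOf τ).flip (a'' ⊗ₜ[ℂ] b''))) (a ⊗ₜ[ℂ] b) (a' ⊗ₜ[ℂ] b')
    = ∑ j ∈ rb.index, ∑ m ∈ ra''.index,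
        counit (R := ℂ) a * counit (R := ℂ) b'' *
          (τ a' (rb.left j) * (τ (ra''.left m) b' * τ (ra''.right m) (rb.right j))) := by
  rw [conv₂_repr _ _ ra ra' rb rb']
  -- evaluate each term
  have hterm : ∀ i j i' j',
      sigmaOf τ (ra.left i ⊗ₜ[ℂ] rb.left j) (ra'.left i' ⊗ₜ[ℂ] rb'.left j') *
      ((LinearMap.mul ℂ (A ⊗[ℂ] B)).compr₂ ((sigmaOf τ).flip (a'' ⊗ₜ[ℂ] b'')))
        (ra.right i ⊗ₜ[ℂ] rb.right j) (ra'.right i' ⊗ₜ[ℂ] rb'.right j')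
      = (τ (ra'.left i') (rb.left j) * (counit (R := ℂ) (ra.left i) * counit (R := ℂ) (rb'.left j'))) *
        (τ a'' (rb.right j * rb'.right j') *
          ((counit (R := ℂ) (ra.right i) * counit (R := ℂ) (ra'.right i')) * counit (R := ℂ) b'')) := by
    intro i j i' j'
    simp only [LinearMap.compr₂_apply, LinearMap.mul_apply', LinearMap.flip_apply,
      Algebra.TensorProduct.tmul_mul_tmul, sigma_tmul, Bialgebra.counit_mul]
  simp only [hterm]
  -- Step A: collapse j'
  have stepA : ∀ i ∈ ra.index, ∀ j ∈ rb.index, ∀ i' ∈ ra'.index,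
      ∑ j' ∈ rb'.index,
        (τ (ra'.left i') (rb.left j) * (counit (R := ℂ) (ra.left i) * counit (R := ℂ) (rb'.left j'))) *
        (τ a'' (rb.right j * rb'.right j') *
          ((counit (R := ℂ) (ra.right i) * counit (R := ℂ) (ra'.right i')) * counit (R := ℂ) b''))
      = (counit (R := ℂ) (ra.left i) * counit (R := ℂ) (ra.right i)) *
          (counit (R := ℂ) b'' * ((τ (ra'.left i') (rb.left j) * counit (R := ℂ) (ra'.right i')) *
            τ a'' (rb.right j * b'))) := by
    intro i _ j _ i' _
    have hc := collapse_left ((τ a'') ∘ₗ (LinearMap.mulLeft ℂ (rb.right j))) rb'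
    simp only [LinearMap.comp_apply, LinearMap.mulLeft_apply] at hc
    calc ∑ j' ∈ rb'.index,
          (τ (ra'.left i') (rb.left j) * (counit (R := ℂ) (ra.left i) * counit (R := ℂ) (rb'.left j'))) *
          (τ a'' (rb.right j * rb'.right j') *
            ((counit (R := ℂ) (ra.right i) * counit (R := ℂ) (ra'.right i')) * counit (R := ℂ) b''))
        = (τ (ra'.left i') (rb.left j) * counit (R := ℂ) (ra.left i) * counit (R := ℂ) (ra.right i) *
            counit (R := ℂ) (ra'.right i') * counit (R := ℂ) b'') *
          ∑ j' ∈ rb'.index, counit (R := ℂ) (rb'.left j') * τ a'' (rb.right j * rb'.right j') := by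
          rw [Finset.mul_sum]; exact Finset.sum_congr rfl fun j' _ => by ring
      _ = _ := by rw [hc]; ring
  rw [Finset.sum_congr rfl fun i hi => Finset.sum_congr rfl fun j hj =>
    Finset.sum_congr rfl fun i' hi' => stepA i hi j hj i' hi']
  -- Step B: collapse i'
  have stepB : ∀ i ∈ ra.index, ∀ j ∈ rb.index,
      ∑ i' ∈ ra'.index,
        (counit (R := ℂ) (ra.left i) * counit (R := ℂ) (ra.right i)) *
          (counit (R := ℂ) b'' * ((τ (ra'.left i') (rb.left j) * counit (R := ℂ) (ra'.right i')) *
            τ a'' (rb.right j * b')))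
      = (counit (R := ℂ) (ra.left i) * counit (R := ℂ) (ra.right i)) *
          (counit (R := ℂ) b'' * (τ a' (rb.left j) * τ a'' (rb.right j * b'))) := by
    intro i _ j _
    have hc := collapse_right (τ.flip (rb.left j)) ra'
    simp only [LinearMap.flip_apply] at hc
    calc ∑ i' ∈ ra'.index,
        (counit (R := ℂ) (ra.left i) * counit (R := ℂ) (ra.right i)) *
          (counit (R := ℂ) b'' * ((τ (ra'.left i') (rb.left j) * counit (R := ℂ) (ra'.right i')) *
            τ a'' (rb.right j * b')))
        = (counit (R := ℂ) (ra.left i) * counit (R := ℂ) (ra.right i) * counit (R := ℂ) b'' *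
            τ a'' (rb.right j * b')) *
          ∑ i' ∈ ra'.index, τ (ra'.left i') (rb.left j) * counit (R := ℂ) (ra'.right i') := by
          rw [Finset.mul_sum]; exact Finset.sum_congr rfl fun i' _ => by ring
      _ = _ := by rw [hc]; ring
  rw [Finset.sum_congr rfl fun i hi => Finset.sum_congr rfl fun j hj => stepB i hi j hj]
  -- Step C: collapse i
  rw [Finset.sum_comm]
  have stepC : ∀ j ∈ rb.index,
      ∑ i ∈ ra.index,
        (counit (R := ℂ) (ra.left i) * counit (R := ℂ) (ra.right i)) *
          (counit (R := ℂ) b'' * (τ a' (rb.left j) * τ a'' (rb.right j * b')))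
      = counit (R := ℂ) a * (counit (R := ℂ) b'' * (τ a' (rb.left j) * τ a'' (rb.right j * b'))) := by
    intro j _
    rw [← Finset.sum_mul, collapse_counit ra]
  rw [Finset.sum_congr rfl stepC]
  -- Step D: h2 + conv_repr
  refine Finset.sum_congr rfl fun j _ => ?_
  rw [h2 a'' (rb.right j) b', conv_repr _ _ ra'']
  simp only [LinearMap.flip_apply, Finset.mul_sum]
  exact Finset.sum_congr rfl fun m _ => by ring

lemma rhs_red
    (h1 : ∀ (a a' : A) (b : B), τ (a * a') b = conv (τ a) (τ a') b)
    (a a' a'' : A) (b b' b'' : B)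
    (ra' : Coalgebra.Repr ℂ a' (A × A)) (ra'' : Coalgebra.Repr ℂ a'' (A × A))
    (rb : Coalgebra.Repr ℂ b (B × B)) (rb' : Coalgebra.Repr ℂ b' (B × B)) (rb'' : Coalgebra.Repr ℂ b'' (B × B)) :
    conv₂ (sigmaOf τ)
        ((LinearMap.mul ℂ (A ⊗[ℂ] B)).compr₂ (sigmaOf τ (a ⊗ₜ[ℂ] b))) (a' ⊗ₜ[ℂ] b') (a'' ⊗ₜ[ℂ] b'')
    = ∑ j ∈ rb.index, ∑ m ∈ ra''.index,
        counit (R := ℂ) a * counit (R := ℂ) b'' *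
          (τ a' (rb.left j) * (τ (ra''.left m) b' * τ (ra''.right m) (rb.right j))) := by
  rw [conv₂_repr _ _ ra' ra'' rb' rb'']
  have hterm : ∀ i' j' m n,
      sigmaOf τ (ra'.left i' ⊗ₜ[ℂ] rb'.left j') (ra''.left m ⊗ₜ[ℂ] rb''.left n) *
      ((LinearMap.mul ℂ (A ⊗[ℂ] B)).compr₂ (sigmaOf τ (a ⊗ₜ[ℂ] b)))
        (ra'.right i' ⊗ₜ[ℂ] rb'.right j') (ra''.right m ⊗ₜ[ℂ] rb''.right n)
      = (τ (ra''.left m) (rb'.left j') * (counit (R := ℂ) (ra'.left i') * counit (R := ℂ) (rb''.left n))) *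
        (τ (ra'.right i' * ra''.right m) b *
          (counit (R := ℂ) a * (counit (R := ℂ) (rb'.right j') * counit (R := ℂ) (rb''.right n)))) := by
    intro i' j' m n
    simp only [LinearMap.compr₂_apply, LinearMap.mul_apply',
      Algebra.TensorProduct.tmul_mul_tmul, sigma_tmul, Bialgebra.counit_mul]
  simp only [hterm]
  -- Step A: collapse n
  have stepA : ∀ i' ∈ ra'.index, ∀ j' ∈ rb'.index, ∀ m ∈ ra''.index,
      ∑ n ∈ rb''.index,
        (τ (ra''.left m) (rb'.left j') * (counit (R := ℂ) (ra'.left i') * counit (R := ℂ) (rb''.left n))) *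
        (τ (ra'.right i' * ra''.right m) b *
          (counit (R := ℂ) a * (counit (R := ℂ) (rb'.right j') * counit (R := ℂ) (rb''.right n))))
      = counit (R := ℂ) b'' *
          ((τ (ra''.left m) (rb'.left j') * counit (R := ℂ) (rb'.right j')) *
            (counit (R := ℂ) (ra'.left i') * (τ (ra'.right i' * ra''.right m) b * counit (R := ℂ) a))) := by
    intro i' _ j' _ m _
    calc ∑ n ∈ rb''.index,
        (τ (ra''.left m) (rb'.left j') * (counit (R := ℂ) (ra'.left i') * counit (R := ℂ) (rb''.left n))) *
        (τ (ra'.right i' * ra''.right m) b *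
          (counit (R := ℂ) a * (counit (R := ℂ) (rb'.right j') * counit (R := ℂ) (rb''.right n))))
        = (τ (ra''.left m) (rb'.left j') * counit (R := ℂ) (ra'.left i') *
            τ (ra'.right i' * ra''.right m) b * counit (R := ℂ) a * counit (R := ℂ) (rb'.right j')) *
          ∑ n ∈ rb''.index, counit (R := ℂ) (rb''.left n) * counit (R := ℂ) (rb''.right n) := by
          rw [Finset.mul_sum]; exact Finset.sum_congr rfl fun n _ => by ring
      _ = _ := by rw [collapse_counit rb'']; ring
  rw [Finset.sum_congr rfl fun i' hi' => Finset.sum_congr rfl fun j' hj' =>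
    Finset.sum_congr rfl fun m hm => stepA i' hi' j' hj' m hm]
  -- swap j' and m
  rw [Finset.sum_congr rfl fun i' (_ : i' ∈ ra'.index) => Finset.sum_comm]
  -- Step B: collapse j'
  have stepB : ∀ i' ∈ ra'.index, ∀ m ∈ ra''.index,
      ∑ j' ∈ rb'.index,
        counit (R := ℂ) b'' *
          ((τ (ra''.left m) (rb'.left j') * counit (R := ℂ) (rb'.right j')) *
            (counit (R := ℂ) (ra'.left i') * (τ (ra'.right i' * ra''.right m) b * counit (R := ℂ) a)))
      = counit (R := ℂ) b'' *
          (τ (ra''.left m) b' *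
            (counit (R := ℂ) (ra'.left i') * (τ (ra'.right i' * ra''.right m) b * counit (R := ℂ) a))) := by
    intro i' _ m _
    have hc := collapse_right (τ (ra''.left m)) rb'
    calc ∑ j' ∈ rb'.index,
        counit (R := ℂ) b'' *
          ((τ (ra''.left m) (rb'.left j') * counit (R := ℂ) (rb'.right j')) *
            (counit (R := ℂ) (ra'.left i') * (τ (ra'.right i' * ra''.right m) b * counit (R := ℂ) a)))
        = (counit (R := ℂ) b'' *
            (counit (R := ℂ) (ra'.left i') * (τ (ra'.right i' * ra''.right m) b * counit (R := ℂ) a))) *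
          ∑ j' ∈ rb'.index, τ (ra''.left m) (rb'.left j') * counit (R := ℂ) (rb'.right j') := by
          rw [Finset.mul_sum]; exact Finset.sum_congr rfl fun j' _ => by ring
      _ = _ := by rw [hc]; ring
  rw [Finset.sum_congr rfl fun i' hi' => Finset.sum_congr rfl fun m hm => stepB i' hi' m hm]
  -- swap i' and m
  rw [Finset.sum_comm]
  -- Step C: collapse i'
  have stepC : ∀ m ∈ ra''.index,
      ∑ i' ∈ ra'.index,
        counit (R := ℂ) b'' *
          (τ (ra''.left m) b' *
            (counit (R := ℂ) (ra'.left i') * (τ (ra'.right i' * ra''.right m) b * counit (R := ℂ) a)))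
      = counit (R := ℂ) b'' *
          (τ (ra''.left m) b' * (τ (a' * ra''.right m) b * counit (R := ℂ) a)) := by
    intro m _
    have hc := collapse_left ((τ.flip b) ∘ₗ (LinearMap.mulRight ℂ (ra''.right m))) ra'
    simp only [LinearMap.comp_apply, LinearMap.mulRight_apply, LinearMap.flip_apply] at hc
    calc ∑ i' ∈ ra'.index,
        counit (R := ℂ) b'' *
          (τ (ra''.left m) b' *
            (counit (R := ℂ) (ra'.left i') * (τ (ra'.right i' * ra''.right m) b * counit (R := ℂ) a)))
        = (counit (R := ℂ) b'' * (τ (ra''.left m) b' * counit (R := ℂ) a)) *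
          ∑ i' ∈ ra'.index, counit (R := ℂ) (ra'.left i') * τ (ra'.right i' * ra''.right m) b := by
          rw [Finset.mul_sum]; exact Finset.sum_congr rfl fun i' _ => by ring
      _ = _ := by rw [hc]; ring
  rw [Finset.sum_congr rfl stepC]
  -- Step D: h1 + conv_repr, then reorder
  have stepD : ∀ m ∈ ra''.index,
      counit (R := ℂ) b'' *
          (τ (ra''.left m) b' * (τ (a' * ra''.right m) b * counit (R := ℂ) a))
      = ∑ j ∈ rb.index,
          counit (R := ℂ) a * counit (R := ℂ) b'' *
            (τ a' (rb.left j) * (τ (ra''.left m) b' * τ (ra''.right m) (rb.right j))) := by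
    intro m _
    rw [h1 a' (ra''.right m) b, conv_repr _ _ rb]
    simp only [Finset.sum_mul, Finset.mul_sum]
    exact Finset.sum_congr rfl fun j _ => by ring
  rw [Finset.sum_congr rfl stepD, Finset.sum_comm]

end Key

section Lin
variable {C : Type} [AddCommGroup C] [Module ℂ C] [Coalgebra ℂ C]

lemma conv₂_zero_right (f : C →ₗ[ℂ] C →ₗ[ℂ] ℂ) : conv₂ f 0 = 0 := by
  have : TensorProduct.lift (0 : C →ₗ[ℂ] C →ₗ[ℂ] ℂ) = 0 := by
    ext x y; simp
  unfold conv₂ conv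
  rw [this, TensorProduct.map_zero_right]
  ext x y
  simp

lemma conv₂_add_right (f g g' : C →ₗ[ℂ] C →ₗ[ℂ] ℂ) :
    conv₂ f (g + g') = conv₂ f g + conv₂ f g' := by
  have : TensorProduct.lift (g + g') =
      TensorProduct.lift g + TensorProduct.lift g' := by
    ext x y; simp
  unfold conv₂ conv
  rw [this, TensorProduct.map_add_right]
  ext x y
  simp [LinearMap.add_comp, LinearMap.comp_add]

lemma compr₂_zero (M : C →ₗ[ℂ] C →ₗ[ℂ] C) : M.compr₂ (0 : C →ₗ[ℂ] ℂ) = 0 := by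
  ext x y; simp

lemma compr₂_add (M : C →ₗ[ℂ] C →ₗ[ℂ] C) (F G : C →ₗ[ℂ] ℂ) :
    M.compr₂ (F + G) = M.compr₂ F + M.compr₂ G := by
  ext x y; simp
end Lin

/-- if `τ` is a skew pairing of Hopf algebras `A, B` over `ℂ`, then
`σ(a⊗b, a'⊗b') = ε(a)ε(b')τ(a',b)` is a normalised 2-cocycle for the tensor
product Hopf algebra `H = A ⊗ B`:
`∑ σ(h₍₁₎,k₍₁₎) σ(h₍₂₎k₍₂₎, l) = ∑ σ(k₍₁₎,l₍₁₎) σ(h, k₍₂₎l₍₂₎)` and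
`σ(h,1) = σ(1,h) = ε(h)`. -/
theorem stmt4 {A B : Type} [Ring A] [Ring B] [HopfAlgebra ℂ A] [HopfAlgebra ℂ B]
    (τ : A →ₗ[ℂ] B →ₗ[ℂ] ℂ)
    (h1 : ∀ (a a' : A) (b : B), τ (a * a') b = conv (τ a) (τ a') b)
    (h2 : ∀ (a : A) (b b' : B), τ a (b * b') = conv (τ.flip b') (τ.flip b) a)
    (h3 : ∀ a : A, τ a 1 = Coalgebra.counit a)
    (h4 : ∀ b : B, τ 1 b = Coalgebra.counit b) :
    (∀ h k l : A ⊗[ℂ] B,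
      conv₂ (sigmaOf τ)
        ((LinearMap.mul ℂ (A ⊗[ℂ] B)).compr₂ ((sigmaOf τ).flip l)) h k
      = conv₂ (sigmaOf τ)
        ((LinearMap.mul ℂ (A ⊗[ℂ] B)).compr₂ (sigmaOf τ h)) k l) ∧
    (∀ h : A ⊗[ℂ] B,
      sigmaOf τ h 1 = Coalgebra.counit h ∧ sigmaOf τ 1 h = Coalgebra.counit h) := by
  constructor
  · intro h k l
    induction l using TensorProduct.induction_on with
    | zero =>
        simp only [map_zero, compr₂_zero, conv₂_zero_right, LinearMap.zero_apply]
    | add x y hx hy =>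
        simp only [map_add, compr₂_add, conv₂_add_right, LinearMap.add_apply, hx, hy]
    | tmul a'' b'' =>
      induction h using TensorProduct.induction_on with
      | zero =>
          simp only [map_zero, compr₂_zero, conv₂_zero_right, LinearMap.zero_apply]
      | add x y hx hy =>
          simp only [map_add, compr₂_add, conv₂_add_right, LinearMap.add_apply, hx, hy]
      | tmul a b =>
        induction k using TensorProduct.induction_on with
        | zero =>
            simp only [map_zero, LinearMap.map_zero, LinearMap.zero_apply]
        | add x y hx hy =>
            simp only [map_add, LinearMap.map_add, LinearMap.add_apply, hx, hy]
        | tmul a' b' =>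
            exact (lhs_red τ h2 a a' a'' b b' b''
              (Coalgebra.Repr.arbitrary ℂ a) (Coalgebra.Repr.arbitrary ℂ a')
              (Coalgebra.Repr.arbitrary ℂ a'') (Coalgebra.Repr.arbitrary ℂ b)
              (Coalgebra.Repr.arbitrary ℂ b')).trans
              (rhs_red τ h1 a a' a'' b b' b''
                (Coalgebra.Repr.arbitrary ℂ a') (Coalgebra.Repr.arbitrary ℂ a'')
                (Coalgebra.Repr.arbitrary ℂ b) (Coalgebra.Repr.arbitrary ℂ b')
                (Coalgebra.Repr.arbitrary ℂ b'')).symm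
  · intro h
    constructor
    · induction h using TensorProduct.induction_on with
      | zero => simp
      | add x y hx hy => simp [map_add, hx, hy]
      | tmul a b =>
          rw [Algebra.TensorProduct.one_def, sigma_tmul, h4]
          simp [mul_comm]
    · induction h using TensorProduct.induction_on with
      | zero => simp
      | add x y hx hy => simp [map_add, hx, hy]
      | tmul a b =>
          rw [Algebra.TensorProduct.one_def, sigma_tmul, h3]
          simp [mul_comm]
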